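/- In the noisy-pair model with class transition matrix T (size c×c, c ≥ 2), the similarity noise rate has the closed form P(H̄ ≠ H) = 1/c + (Σ_j (Σ_i T_{ij})² − 2·‖T‖_Fro²) / c², where ‖T‖_Fro² = Σ_{i,j} T_{ij}² and Σ_i T_{ij} denotes the j-th column sum of T. -/

import Mathlib

/- The probability of an event `A` (on quadruples `(i₁, j₁, i₂, j₂)` of clean/noisy class
labels for two independent points) in the noisy-pair model with class transition matrix `T`
and uniform class priors: each quadruple has probability `(1/c²) · T i₁ j₁ · T i₂ j₂`. -/
open Classical in
noncomputable def noisyPairProb (c : ℕ) (T : Matrix (Fin c) (Fin c) ℝ)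
    (A : Fin c → Fin c → Fin c → Fin c → Prop) : ℝ :=
  ∑ i₁ : Fin c, ∑ j₁ : Fin c, ∑ i₂ : Fin c, ∑ j₂ : Fin c,
    if A i₁ j₁ i₂ j₂ then (1 / (c : ℝ) ^ 2) * T i₁ j₁ * T i₂ j₂ else 0

/-- Canonical classical indicator. -/
noncomputable def ind (P : Prop) (x : ℝ) : ℝ := @ite ℝ P (Classical.propDecidable P) x 0

/-- Closed form for the similarity noise rate:
`P(H̄ ≠ H) = 1/c + (Σ_j (Σ_i T_{ij})² − 2‖T‖_Fro²) / c²`. -/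
theorem simiNoise_closed_form (c : ℕ) (hc : 2 ≤ c) (T : Matrix (Fin c) (Fin c) ℝ)
    (hpos : ∀ i j, 0 ≤ T i j) (hrow : ∀ i, ∑ j, T i j = 1) :
    noisyPairProb c T (fun i₁ j₁ i₂ j₂ => ¬ ((i₁ = i₂) ↔ (j₁ = j₂))) =
      1 / (c : ℝ) +
        ((∑ j, (∑ i, T i j) ^ 2) - 2 * ∑ i, ∑ j, (T i j) ^ 2) / (c : ℝ) ^ 2 := by
  classical
  have hc0 : (c : ℝ) ≠ 0 := by
    have : 0 < c := by omega
    exact_mod_cast this.ne'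
  set w : Fin c → Fin c → Fin c → Fin c → ℝ :=
    fun i₁ j₁ i₂ j₂ => (1 / (c : ℝ) ^ 2) * T i₁ j₁ * T i₂ j₂ with hw
  have key : ∀ (P Q : Prop) (x : ℝ),
      ind (¬ (P ↔ Q)) x = ind P x + ind Q x - 2 * ind (P ∧ Q) x := by
    intro P Q x
    by_cases hP : P <;> by_cases hQ : Q <;> simp [ind, hP, hQ] <;> ring
  have hA : (∑ i₁ : Fin c, ∑ j₁ : Fin c, ∑ i₂ : Fin c, ∑ j₂ : Fin c,
      ind (i₁ = i₂) (w i₁ j₁ i₂ j₂)) = 1 / (c : ℝ) := by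
    have h1 : ∀ i₁ j₁ : Fin c, (∑ i₂ : Fin c, ∑ j₂ : Fin c,
        ind (i₁ = i₂) (w i₁ j₁ i₂ j₂)) = (1 / (c : ℝ) ^ 2) * T i₁ j₁ := by
      intro i₁ j₁
      rw [Finset.sum_comm]
      simp only [ind, hw, Finset.sum_ite_eq, Finset.mem_univ, if_true]
      rw [← Finset.mul_sum, hrow, mul_one]
    simp only [h1, ← Finset.mul_sum, hrow, mul_one]
    rw [Finset.sum_const, Finset.card_univ, Fintype.card_fin, nsmul_eq_mul]
    field_simp
  have hB : (∑ i₁ : Fin c, ∑ j₁ : Fin c, ∑ i₂ : Fin c, ∑ j₂ : Fin c,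
      ind (j₁ = j₂) (w i₁ j₁ i₂ j₂))
      = (∑ j, (∑ i, T i j) ^ 2) / (c : ℝ) ^ 2 := by
    have h1 : ∀ i₁ j₁ : Fin c, (∑ i₂ : Fin c, ∑ j₂ : Fin c,
        ind (j₁ = j₂) (w i₁ j₁ i₂ j₂))
        = (1 / (c : ℝ) ^ 2) * T i₁ j₁ * ∑ i₂, T i₂ j₁ := by
      intro i₁ j₁
      simp [ind, hw, Finset.sum_ite_eq, Finset.mul_sum]
    simp only [h1]
    rw [Finset.sum_comm, Finset.sum_div]
    refine Finset.sum_congr rfl fun j _ => ?_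
    rw [← Finset.sum_mul, ← Finset.mul_sum]
    ring
  have hC : (∑ i₁ : Fin c, ∑ j₁ : Fin c, ∑ i₂ : Fin c, ∑ j₂ : Fin c,
      ind (i₁ = i₂ ∧ j₁ = j₂) (w i₁ j₁ i₂ j₂))
      = (∑ i, ∑ j, (T i j) ^ 2) / (c : ℝ) ^ 2 := by
    have h1 : ∀ i₁ j₁ : Fin c, (∑ i₂ : Fin c, ∑ j₂ : Fin c,
        ind (i₁ = i₂ ∧ j₁ = j₂) (w i₁ j₁ i₂ j₂))
        = (1 / (c : ℝ) ^ 2) * T i₁ j₁ ^ 2 := by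
      intro i₁ j₁
      rw [Finset.sum_comm]
      simp only [ind, hw, ite_and, Finset.sum_ite_eq, Finset.mem_univ, if_true]
      ring
    simp only [h1, ← Finset.mul_sum]
    field_simp
  show (∑ i₁ : Fin c, ∑ j₁ : Fin c, ∑ i₂ : Fin c, ∑ j₂ : Fin c,
      ind (¬ ((i₁ = i₂) ↔ (j₁ = j₂))) ((1 / (c : ℝ) ^ 2) * T i₁ j₁ * T i₂ j₂)) = _
  simp only [key]
  simp only [Finset.sum_sub_distrib, Finset.sum_add_distrib, ← Finset.mul_sum]
  rw [hA, hB, hC]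
  ring
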